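/- Let p be an odd prime and e a positive integer. The number of pairs (x, y) of residues modulo p^e satisfying x² ≡ y² (mod p^e) is exactly 2·p^e·(1 − 1/p)·⌈e/2⌉ + p^{2⌊e/2⌋}. -/

import Mathlib

theorem mult_bij (p m : ℕ) (hp : 0 < p) (f : ℕ → ℕ) :
    ∑ d ∈ (Finset.range (p * m)).filter (p ∣ ·), f d
      = ∑ d ∈ Finset.range m, f (p * d) := by
  apply Finset.sum_nbij' (fun d => d / p) (fun d => p * d)
  · intro a ha
    simp only [Finset.mem_filter, Finset.mem_range] at ha
    exact Finset.mem_range.2 ((Nat.div_lt_iff_lt_mul hp).2 (by rw [mul_comm]; exact ha.1))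
  · intro a ha
    simp only [Finset.mem_range] at ha
    simp only [Finset.mem_filter, Finset.mem_range]
    exact ⟨by exact (Nat.mul_lt_mul_left hp).2 ha, Dvd.intro a rfl⟩
  · intro a ha
    simp only [Finset.mem_filter] at ha
    exact Nat.mul_div_cancel' ha.2
  · intro a ha
    exact Nat.mul_div_cancel_left a hp
  · intro a ha
    simp only [Finset.mem_filter] at ha
    rw [Nat.mul_div_cancel' ha.2]

theorem sum_gcd_pow (p : ℕ) (hp : p.Prime) : ∀ e : ℕ,
    ∑ d ∈ Finset.range (p ^ e), Nat.gcd d (p ^ e) = e * (p - 1) * p ^ (e - 1) + p ^ e := by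
  intro e
  induction e with
  | zero => simp
  | succ e ih =>
    have hpos := hp.pos
    have hsplit := Finset.sum_filter_add_sum_filter_not (Finset.range (p ^ (e+1)))
      (p ∣ ·) (fun d => Nat.gcd d (p ^ (e+1)))
    have h1 : ∑ d ∈ (Finset.range (p ^ (e+1))).filter (p ∣ ·), Nat.gcd d (p ^ (e+1))
        = p * (e * (p - 1) * p ^ (e - 1) + p ^ e) := by
      rw [← ih, pow_succ, mul_comm (p^e) p, mult_bij p (p^e) hpos, Finset.mul_sum]
      refine Finset.sum_congr rfl fun d hd => ?_
      rw [Nat.gcd_mul_left]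
    have h2 : ∑ d ∈ (Finset.range (p ^ (e+1))).filter (¬ p ∣ ·), Nat.gcd d (p ^ (e+1))
        = p ^ (e+1) - p ^ e := by
      have hc : ∀ d ∈ (Finset.range (p ^ (e+1))).filter (¬ p ∣ ·),
          Nat.gcd d (p ^ (e+1)) = 1 := by
        intro d hd
        simp only [Finset.mem_filter] at hd
        exact Nat.Coprime.pow_right _ ((Nat.Prime.coprime_iff_not_dvd hp).2 hd.2).symm
      rw [Finset.sum_congr rfl hc, Finset.sum_const, smul_eq_mul, mul_one]
      have hcard : ((Finset.range (p ^ (e+1))).filter (p ∣ ·)).card = p ^ e := by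
        have := mult_bij p (p^e) hpos (fun _ => 1)
        rw [mul_comm p (p^e), ← pow_succ] at this
        simpa using this
      rw [Finset.filter_not, Finset.card_sdiff_of_subset (Finset.filter_subset _ _), hcard,
        Finset.card_range]
    rw [← hsplit, h1, h2]
    have hle : p ^ e ≤ p ^ (e+1) := Nat.pow_le_pow_right hpos (by omega)
    have h3 : p * p ^ (e-1) * (e * (p-1)) = p ^ e * (e * (p - 1)) := by
      cases e with
      | zero => simp
      | succ e' => rw [Nat.succ_sub_one, ← pow_succ']
    have h1p : 1 ≤ p := hpos
    simp only [Nat.add_sub_cancel]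
    zify [hle, h1p] at h3 ⊢
    linear_combination h3


theorem card_multiples_zmod (n m g : ℕ) [NeZero n] (hmg : m * g = n) :
    (Finset.univ.filter fun s : ZMod n => m ∣ s.val).card = g := by
  have hn : 0 < n := Nat.pos_of_ne_zero (NeZero.ne n)
  have hm : 0 < m := by
    rcases Nat.eq_zero_or_pos m with h | h
    · subst h; simp at hmg; omega
    · exact h
  rw [← Finset.card_range g]
  apply Finset.card_nbij' (fun s => s.val / m) (fun k => ((k * m : ℕ) : ZMod n))
  · intro s hs
    simp only [Finset.mem_coe, Finset.mem_filter] at hs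
    have := ZMod.val_lt s
    refine Finset.mem_range.2 ((Nat.div_lt_iff_lt_mul hm).2 ?_)
    rw [mul_comm g m, hmg]; omega
  · intro k hk
    simp only [Finset.mem_coe, Finset.mem_range] at hk
    have hlt : k * m < n := by
      rw [← hmg, mul_comm m g]; exact (Nat.mul_lt_mul_right hm).2 hk
    simp only [Finset.mem_coe, Finset.mem_filter, Finset.mem_univ, true_and]
    rw [ZMod.val_cast_of_lt hlt]
    exact dvd_mul_left m k
  · intro s hs
    simp only [Finset.mem_coe, Finset.mem_filter] at hs
    dsimp only; rw [Nat.div_mul_cancel hs.2]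
    exact ZMod.natCast_rightInverse s
  · intro k hk
    simp only [Finset.mem_coe, Finset.mem_range] at hk
    have hlt : k * m < n := by
      rw [← hmg, mul_comm m g]; exact (Nat.mul_lt_mul_right hm).2 hk
    dsimp only; rw [ZMod.val_cast_of_lt hlt, Nat.mul_div_cancel _ hm]

theorem card_ann (n : ℕ) [NeZero n] (d : ZMod n) :
    (Finset.univ.filter fun s : ZMod n => s * d = 0).card = Nat.gcd d.val n := by
  have hn : 0 < n := Nat.pos_of_ne_zero (NeZero.ne n)
  set g := Nat.gcd d.val n with hg
  have hgpos : 0 < g := Nat.gcd_pos_of_pos_right _ hn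
  have hgd : g ∣ n := Nat.gcd_dvd_right _ _
  have hmg : (n / g) * g = n := Nat.div_mul_cancel hgd
  have hd' : d.val / g * g = d.val := Nat.div_mul_cancel (Nat.gcd_dvd_left _ _)
  have hiff : ∀ s : ZMod n, (s * d = 0 ↔ (n / g) ∣ s.val) := by
    intro s
    have hcast : s * d = ((s.val * d.val : ℕ) : ZMod n) := by
      rw [Nat.cast_mul, ZMod.natCast_val, ZMod.natCast_val, ZMod.cast_id, ZMod.cast_id]
    have h1 : s * d = 0 ↔ n ∣ s.val * d.val := by
      rw [hcast, ZMod.natCast_eq_zero_iff]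
    rw [h1]
    constructor
    · intro h
      have h2 : (n/g) * g ∣ (s.val * (d.val/g)) * g := by
        rw [hmg, mul_assoc, hd']; exact h
      have h3 := (Nat.mul_dvd_mul_iff_right hgpos).1 h2
      exact Nat.Coprime.dvd_of_dvd_mul_right ((Nat.coprime_div_gcd_div_gcd hgpos).symm) h3
    · intro h
      have h4 : (n/g) * g ∣ s.val * d.val := mul_dvd_mul h (Nat.gcd_dvd_left _ _)
      rwa [hmg] at h4
  rw [Finset.filter_congr (fun s _ => by rw [hiff s])]
  exact card_multiples_zmod n (n/g) g hmg

/-- For an odd prime `p`, the number of pairs `(x, y)` of residues modulo `p^e` with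
`x² ≡ y² (mod p^e)` is exactly `2·p^e·(1 − 1/p)·⌈e/2⌉ + p^{2⌊e/2⌋}`.  Here
`2·p^e·(1 − 1/p) = 2·(p − 1)·p^(e−1)`, `⌈e/2⌉ = (e+1)/2` and `⌊e/2⌋ = e/2` in
natural-number arithmetic. -/
theorem count_square_congruence_odd_prime_exact (p e : ℕ) (hp : p.Prime) (hodd : Odd p)
    (he : 1 ≤ e) :
    ((Finset.range (p ^ e) ×ˢ Finset.range (p ^ e)).filter
        (fun xy : ℕ × ℕ => ((p : ℤ) ^ e ∣ (xy.1 : ℤ) ^ 2 - (xy.2 : ℤ) ^ 2))).card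
      = 2 * (p - 1) * p ^ (e - 1) * ((e + 1) / 2) + p ^ (2 * (e / 2)) := by
  set n := p ^ e with hn
  have hnpos : 0 < n := pow_pos hp.pos e
  haveI : NeZero n := ⟨hnpos.ne'⟩
  -- Step 1: transfer to ZMod n
  have step1 : ((Finset.range n ×ˢ Finset.range n).filter
        (fun xy : ℕ × ℕ => ((p : ℤ) ^ e ∣ (xy.1 : ℤ) ^ 2 - (xy.2 : ℤ) ^ 2))).card
      = (Finset.univ.filter fun ab : ZMod n × ZMod n => ab.1 ^ 2 = ab.2 ^ 2).card := by
    have key : ∀ x y : ℕ, ((p : ℤ) ^ e ∣ (x : ℤ) ^ 2 - (y : ℤ) ^ 2) ↔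
        ((x : ZMod n)) ^ 2 = ((y : ZMod n)) ^ 2 := by
      intro x y
      rw [← sub_eq_zero]
      have hc : ((((x : ℤ) ^ 2 - (y : ℤ) ^ 2 : ℤ)) : ZMod n)
          = (x : ZMod n) ^ 2 - (y : ZMod n) ^ 2 := by push_cast; ring
      rw [← hc, ZMod.intCast_zmod_eq_zero_iff_dvd]
      have hnz : ((n : ℕ) : ℤ) = (p : ℤ) ^ e := by push_cast [hn]; ring
      rw [hnz]
    apply Finset.card_nbij' (fun xy : ℕ × ℕ => ((xy.1 : ZMod n), (xy.2 : ZMod n)))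
      (fun ab : ZMod n × ZMod n => (ab.1.val, ab.2.val))
    · intro a ha
      simp only [Finset.mem_coe, Finset.mem_filter, Finset.mem_product, Finset.mem_range] at ha
      simp only [Finset.mem_coe, Finset.mem_filter, Finset.mem_univ, true_and]
      exact (key a.1 a.2).1 ha.2
    · intro b hb
      simp only [Finset.mem_coe, Finset.mem_filter, Finset.mem_univ, true_and] at hb
      simp only [Finset.mem_coe, Finset.mem_filter, Finset.mem_product, Finset.mem_range]
      refine ⟨⟨ZMod.val_lt _, ZMod.val_lt _⟩, ?_⟩
      apply (key _ _).2
      rwa [ZMod.natCast_rightInverse b.1, ZMod.natCast_rightInverse b.2]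
    · intro a ha
      simp only [Finset.mem_coe, Finset.mem_filter, Finset.mem_product, Finset.mem_range] at ha
      exact Prod.ext (ZMod.val_cast_of_lt ha.1.1) (ZMod.val_cast_of_lt ha.1.2)
    · intro b hb
      exact Prod.ext (ZMod.natCast_rightInverse b.1) (ZMod.natCast_rightInverse b.2)
  -- Step 2: change of variables
  have hu : IsUnit (2 : ZMod n) := by
    rw [show ((2 : ZMod n)) = ((2 : ℕ) : ZMod n) by norm_num, ZMod.isUnit_iff_coprime]
    refine Nat.Coprime.pow_right _ ((Nat.Prime.coprime_iff_not_dvd Nat.prime_two).2 ?_)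
    have := Nat.odd_iff.mp hodd
    omega
  set c : ZMod n := (2 : ZMod n)⁻¹ with hc
  have h2c : (2 : ZMod n) * c = 1 := ZMod.mul_inv_of_unit _ hu
  have step2 : (Finset.univ.filter fun ab : ZMod n × ZMod n => ab.1 ^ 2 = ab.2 ^ 2).card
      = (Finset.univ.filter fun sd : ZMod n × ZMod n => sd.1 * sd.2 = 0).card := by
    apply Finset.card_nbij' (fun ab : ZMod n × ZMod n => (ab.1 + ab.2, ab.1 - ab.2))
      (fun sd : ZMod n × ZMod n => ((sd.1 + sd.2) * c, (sd.1 - sd.2) * c))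
    · intro a ha
      simp only [Finset.mem_coe, Finset.mem_filter, Finset.mem_univ, true_and] at ha ⊢
      linear_combination ha
    · intro b hb
      simp only [Finset.mem_coe, Finset.mem_filter, Finset.mem_univ, true_and] at hb ⊢
      linear_combination (4 * c ^ 2) * hb
    · intro a _
      refine Prod.ext ?_ ?_
      · simp only; linear_combination a.1 * h2c
      · simp only; linear_combination a.2 * h2c
    · intro b _
      refine Prod.ext ?_ ?_
      · simp only; linear_combination b.1 * h2c
      · simp only; linear_combination b.2 * h2c
  -- Step 3: sum over annihilators
  have step3 : (Finset.univ.filter fun sd : ZMod n × ZMod n => sd.1 * sd.2 = 0).card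
      = ∑ d ∈ Finset.range n, Nat.gcd d n := by
    rw [Finset.card_filter, ← Finset.univ_product_univ, Finset.sum_product_right]
    have inner : ∀ d : ZMod n, (∑ s : ZMod n, if s * d = 0 then 1 else 0)
        = Nat.gcd d.val n := by
      intro d
      rw [← Finset.card_filter]
      exact card_ann n d
    rw [Finset.sum_congr rfl (fun d _ => inner d)]
    apply Finset.sum_nbij' (fun d : ZMod n => d.val) (fun k : ℕ => (k : ZMod n))
    · intro a _; exact Finset.mem_range.2 (ZMod.val_lt a)
    · intro b _; exact Finset.mem_univ _
    · intro a _; exact ZMod.natCast_rightInverse a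
    · intro b hb; exact ZMod.val_cast_of_lt (Finset.mem_range.1 hb)
    · intro a _; rfl
  rw [step1, step2, step3, hn, sum_gcd_pow p hp e]
  -- Step 4: arithmetic
  have h1p : 1 ≤ p := hp.pos
  rcases Nat.even_or_odd e with ⟨k, hk⟩ | ⟨k, hk⟩
  · have hk1 : 1 ≤ k := by omega
    have e1 : (e + 1) / 2 = k := by omega
    have e2 : 2 * (e / 2) = e := by omega
    rw [e1, e2, hk]
    have : k + k - 1 = (k + k - 1) := rfl
    zify [h1p]
    ring
  · have e1 : (e + 1) / 2 = k + 1 := by omega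
    have e2 : 2 * (e / 2) = 2 * k := by omega
    have e3 : e - 1 = 2 * k := by omega
    rw [e1, e2, e3, hk, pow_succ]
    zify [h1p]
    ring
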